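/- Let f : ℝ² → ℝ be continuous and twice continuously differentiable on a nonempty open convex set S ⊆ ℝ². If D_f(x) < 0 for all x ∈ S, where D_f denotes the determinant of the bordered Hessian of f, then f is quasiconvex on the closure of S. -/

import Mathlib

open Set Filter Topology

lemma aux1d (g g' g'' : ℝ → ℝ)
    (h1 : ∀ t ∈ Set.Icc (0:ℝ) 1, HasDerivAt g (g' t) t)
    (h2 : ∀ t ∈ Set.Ioo (0:ℝ) 1, HasDerivAt g' (g'' t) t)
    (h3 : ∀ t ∈ Set.Ioo (0:ℝ) 1, g' t = 0 → 0 < g'' t) :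
    ∀ t ∈ Set.Icc (0:ℝ) 1, g t ≤ max (g 0) (g 1) := by
  have hcont : ContinuousOn g (Set.Icc (0:ℝ) 1) :=
    fun t ht => (h1 t ht).continuousAt.continuousWithinAt
  obtain ⟨t₀, ht₀, hmax⟩ := isCompact_Icc.exists_isMaxOn (by norm_num : (Set.Icc (0:ℝ) 1).Nonempty) hcont
  intro t ht
  have hle : g t ≤ g t₀ := hmax ht
  rcases eq_or_lt_of_le ht₀.1 with h0 | h0
  · exact le_max_of_le_left (h0 ▸ hle)
  rcases eq_or_lt_of_le ht₀.2 with h1' | h1'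
  · exact le_max_of_le_right (h1' ▸ hle)
  exfalso
  have ht₀oo : t₀ ∈ Set.Ioo (0:ℝ) 1 := ⟨h0, h1'⟩
  have hloc : IsLocalMax g t₀ := hmax.isLocalMax (Icc_mem_nhds h0 h1')
  have hg'0 : g' t₀ = 0 := hloc.hasDerivAt_eq_zero (h1 t₀ ht₀)
  have hpos : 0 < g'' t₀ := h3 t₀ ht₀oo hg'0
  have hslope : Tendsto (slope g' t₀) (𝓝[>] t₀) (𝓝 (g'' t₀)) :=
    ((hasDerivAt_iff_tendsto_slope.1 (h2 t₀ ht₀oo)).mono_left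
      (nhdsWithin_mono _ (fun x hx => ne_of_gt hx)))
  have hev : ∀ᶠ s in 𝓝[>] t₀, 0 < g' s ∧ s < 1 := by
    have hlt : ∀ᶠ s in 𝓝[>] t₀, s < 1 :=
      eventually_nhdsWithin_of_eventually_nhds (eventually_lt_nhds h1')
    filter_upwards [hslope.eventually (eventually_gt_nhds hpos), self_mem_nhdsWithin, hlt]
      with s hs hs' hs1
    refine ⟨?_, hs1⟩
    have hd : 0 < s - t₀ := sub_pos.2 hs'
    rw [slope_def_field, hg'0, sub_zero] at hs
    have := mul_pos hs hd
    rwa [div_mul_cancel₀ _ (ne_of_gt hd)] at this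
  obtain ⟨c, hc, hsub⟩ := (mem_nhdsGT_iff_exists_Ioc_subset).1 hev
  have hcmem : 0 < g' c ∧ c < 1 := hsub ⟨hc, le_refl c⟩
  have hmono : StrictMonoOn g (Set.Icc t₀ c) := by
    apply strictMonoOn_of_deriv_pos (convex_Icc _ _)
    · intro s hs
      exact (h1 s ⟨le_trans (le_of_lt h0) hs.1, le_trans hs.2 (le_of_lt hcmem.2)⟩).continuousAt.continuousWithinAt
    · intro s hs
      rw [interior_Icc] at hs
      have hs01 : s ∈ Set.Icc (0:ℝ) 1 := ⟨le_of_lt (lt_trans h0 hs.1), le_of_lt (lt_trans hs.2 hcmem.2)⟩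
      rw [(h1 s hs01).deriv]
      exact (hsub ⟨hs.1, le_of_lt hs.2⟩).1
  have hlt : g t₀ < g c := hmono (Set.left_mem_Icc.2 (le_of_lt hc)) (Set.right_mem_Icc.2 (le_of_lt hc)) hc
  have : g c ≤ g t₀ := hmax ⟨le_of_lt (lt_trans h0 hc), le_of_lt hcmem.2⟩
  linarith


set_option maxHeartbeats 1000000 in
lemma auxpt (f : ℝ × ℝ → ℝ) (x : ℝ × ℝ) (B : (ℝ × ℝ) →L[ℝ] (ℝ × ℝ) →L[ℝ] ℝ)
    (hfd : ∀ᶠ y in 𝓝 x, HasFDerivAt f (fderiv ℝ f y) y)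
    (hB : HasFDerivAt (fderiv ℝ f) B x)
    (hD : 2 * fderiv ℝ f x ((1 : ℝ), (0 : ℝ)) * fderiv ℝ f x ((0 : ℝ), (1 : ℝ)) *
            fderiv ℝ (fun y => fderiv ℝ f y ((1 : ℝ), (0 : ℝ))) x ((0 : ℝ), (1 : ℝ)) -
          (fderiv ℝ f x ((1 : ℝ), (0 : ℝ))) ^ 2 *
            fderiv ℝ (fun y => fderiv ℝ f y ((0 : ℝ), (1 : ℝ))) x ((0 : ℝ), (1 : ℝ)) -
          (fderiv ℝ f x ((0 : ℝ), (1 : ℝ))) ^ 2 *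
            fderiv ℝ (fun y => fderiv ℝ f y ((1 : ℝ), (0 : ℝ))) x ((1 : ℝ), (0 : ℝ)) < 0)
    (v : ℝ × ℝ) (hv : v ≠ 0) (h0 : fderiv ℝ f x v = 0) : 0 < B v v := by
  have hder : ∀ w : ℝ × ℝ, fderiv ℝ (fun y => fderiv ℝ f y w) x =
      (ContinuousLinearMap.apply ℝ ℝ w).comp B := by
    intro w
    exact (((ContinuousLinearMap.apply ℝ ℝ w).hasFDerivAt).comp x hB).fderiv
  rw [hder, hder] at hD
  simp only [ContinuousLinearMap.coe_comp', Function.comp_apply,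
    ContinuousLinearMap.apply_apply] at hD
  set A := fderiv ℝ f x ((1 : ℝ), (0 : ℝ)) with hA
  set C := fderiv ℝ f x ((0 : ℝ), (1 : ℝ)) with hC
  have hsym : B ((1 : ℝ), (0 : ℝ)) ((0 : ℝ), (1 : ℝ)) = B ((0 : ℝ), (1 : ℝ)) ((1 : ℝ), (0 : ℝ)) :=
    second_derivative_symmetric_of_eventually hfd hB _ _
  set p := B ((1 : ℝ), (0 : ℝ)) ((1 : ℝ), (0 : ℝ)) with hp
  set q := B ((0 : ℝ), (1 : ℝ)) ((1 : ℝ), (0 : ℝ)) with hq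
  set r := B ((0 : ℝ), (1 : ℝ)) ((0 : ℝ), (1 : ℝ)) with hr
  have hvdec : v = v.1 • ((1 : ℝ), (0 : ℝ)) + v.2 • ((0 : ℝ), (1 : ℝ)) := by
    ext <;> simp
  have hL : A * v.1 + C * v.2 = 0 := by
    rw [hvdec] at h0
    simp only [map_add, map_smul, smul_eq_mul] at h0
    linarith [h0]
  have hQ : B v v = p * v.1 ^ 2 + 2 * q * v.1 * v.2 + r * v.2 ^ 2 := by
    conv_lhs => rw [hvdec]
    simp only [map_add, map_smul, ContinuousLinearMap.add_apply,
      ContinuousLinearMap.smul_apply, smul_eq_mul]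
    rw [hsym]
    ring
  have hv2 : 0 < v.1 ^ 2 + v.2 ^ 2 := by
    have : v.1 ≠ 0 ∨ v.2 ≠ 0 := by
      by_contra hcon
      push_neg at hcon
      exact hv (Prod.ext hcon.1 hcon.2)
    rcases this with h | h <;>
      nlinarith [sq_nonneg v.1, sq_nonneg v.2, pow_pos (abs_pos.2 h) 2, sq_abs v.1, sq_abs v.2]
  have hAC : 0 < A ^ 2 + C ^ 2 := by
    by_contra hcon
    push_neg at hcon
    have hA0 : A = 0 := by nlinarith [sq_nonneg A, sq_nonneg C]
    have hC0 : C = 0 := by nlinarith [sq_nonneg A, sq_nonneg C]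
    rw [hA0, hC0] at hD
    norm_num at hD
  have key : (A ^ 2 + C ^ 2) * (B v v) =
      (v.1 ^ 2 + v.2 ^ 2) * -(2 * A * C * q - A ^ 2 * r - C ^ 2 * p) := by
    rw [hQ]
    linear_combination (p * (A * v.1 - C * v.2) + r * (C * v.2 - A * v.1) +
      2 * q * (A * v.2 + C * v.1)) * hL
  nlinarith [mul_pos hv2 (neg_pos.2 hD), key, hAC, mul_pos hAC (mul_pos hv2 (neg_pos.2 hD))]


theorem stmt_5 (f : ℝ × ℝ → ℝ) (hf : Continuous f) (S : Set (ℝ × ℝ))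
    (hSopen : IsOpen S) (hSconv : Convex ℝ S) (hSne : S.Nonempty)
    (hC2 : ContDiffOn ℝ 2 f S)
    (hD : ∀ x ∈ S,
      2 * fderiv ℝ f x ((1 : ℝ), (0 : ℝ)) * fderiv ℝ f x ((0 : ℝ), (1 : ℝ)) *
            fderiv ℝ (fun y => fderiv ℝ f y ((1 : ℝ), (0 : ℝ))) x ((0 : ℝ), (1 : ℝ)) -
          (fderiv ℝ f x ((1 : ℝ), (0 : ℝ))) ^ 2 *
            fderiv ℝ (fun y => fderiv ℝ f y ((0 : ℝ), (1 : ℝ))) x ((0 : ℝ), (1 : ℝ)) -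
          (fderiv ℝ f x ((0 : ℝ), (1 : ℝ))) ^ 2 *
            fderiv ℝ (fun y => fderiv ℝ f y ((1 : ℝ), (0 : ℝ))) x ((1 : ℝ), (0 : ℝ)) < 0) :
    QuasiconvexOn ℝ (closure S) f := by
  have hfd : ∀ x ∈ S, HasFDerivAt f (fderiv ℝ f x) x := fun x hx =>
    ((hC2.contDiffAt (hSopen.mem_nhds hx)).differentiableAt (by norm_num)).hasFDerivAt
  have hfd' : ∀ x ∈ S, HasFDerivAt (fderiv ℝ f) (fderiv ℝ (fderiv ℝ f) x) x := fun x hx =>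
    ((((hC2.contDiffAt (hSopen.mem_nhds hx)).fderiv_right (m := 1)
      (by norm_num)).differentiableAt one_ne_zero).hasFDerivAt)
  have key : ∀ x ∈ S, ∀ v : ℝ × ℝ, v ≠ 0 → fderiv ℝ f x v = 0 →
      0 < fderiv ℝ (fderiv ℝ f) x v v := fun x hx v hv h0 =>
    auxpt f x _ (eventually_of_mem (hSopen.mem_nhds hx) (fun y hy => hfd y hy))
      (hfd' x hx) (hD x hx) v hv h0
  have seg : ∀ x ∈ S, ∀ y ∈ S, ∀ a b : ℝ, 0 ≤ a → 0 ≤ b → a + b = 1 →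
      f (a • x + b • y) ≤ max (f x) (f y) := by
    intro x hx y hy a b ha hb hab
    by_cases hxy : y - x = 0
    · have hxy' : y = x := by rwa [sub_eq_zero] at hxy
      subst hxy'
      have : a • y + b • y = y := by rw [← add_smul, hab, one_smul]
      rw [this]
      exact le_max_left _ _
    set v := y - x with hvdef
    set γ : ℝ → ℝ × ℝ := fun t => x + t • v with hγdef
    have hγS : ∀ t ∈ Set.Icc (0:ℝ) 1, γ t ∈ S := by
      intro t ht
      have : γ t = (1 - t) • x + t • y := by
        simp only [hγdef, hvdef]
        rw [smul_sub, sub_smul, one_smul]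
        abel
      rw [this]
      exact hSconv hx hy (by linarith [ht.2]) ht.1 (by ring)
    have hγd : ∀ t : ℝ, HasDerivAt γ v t := by
      intro t
      have h := ((hasDerivAt_id t).smul_const v).const_add x
      rw [one_smul] at h
      exact h
    have hg : ∀ t ∈ Set.Icc (0:ℝ) 1, HasDerivAt (fun t => f (γ t)) (fderiv ℝ f (γ t) v) t :=
      fun t ht => (hfd (γ t) (hγS t ht)).comp_hasDerivAt t (hγd t)
    have hg' : ∀ t ∈ Set.Icc (0:ℝ) 1,
        HasDerivAt (fun t => fderiv ℝ f (γ t) v) (fderiv ℝ (fderiv ℝ f) (γ t) v v) t := by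
      intro t ht
      have h1 : HasDerivAt (fun t => fderiv ℝ f (γ t)) (fderiv ℝ (fderiv ℝ f) (γ t) v) t :=
        (hfd' (γ t) (hγS t ht)).comp_hasDerivAt t (hγd t)
      have h2 := (ContinuousLinearMap.apply ℝ ℝ v).hasFDerivAt.comp_hasDerivAt t h1
      exact h2
    have hmax := aux1d (fun t => f (γ t)) (fun t => fderiv ℝ f (γ t) v)
      (fun t => fderiv ℝ (fderiv ℝ f) (γ t) v v) hg
      (fun t ht => hg' t (Set.Ioo_subset_Icc_self ht))
      (fun t ht h0 => key (γ t) (hγS t (Set.Ioo_subset_Icc_self ht)) v hxy h0)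
    have hb1 : b ∈ Set.Icc (0:ℝ) 1 := ⟨hb, by linarith⟩
    have h0' : γ 0 = x := by simp [hγdef]
    have h1' : γ 1 = y := by simp [hγdef, hvdef]
    have hbpt : γ b = a • x + b • y := by
      simp only [hγdef, hvdef]
      have hab' : a = 1 - b := by linarith
      rw [hab', smul_sub, sub_smul, one_smul]
      abel
    have := hmax b hb1
    simp only [h0', h1', hbpt] at this
    exact this
  rw [quasiconvexOn_iff_le_max]
  refine ⟨hSconv.closure, ?_⟩
  intro x hx y hy a b ha hb hab
  obtain ⟨u, hu, hulim⟩ := mem_closure_iff_seq_limit.1 hx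
  obtain ⟨w, hw, hwlim⟩ := mem_closure_iff_seq_limit.1 hy
  have hseq : ∀ n, f (a • u n + b • w n) ≤ max (f (u n)) (f (w n)) :=
    fun n => seg _ (hu n) _ (hw n) a b ha hb hab
  have l1 : Tendsto (fun n => f (a • u n + b • w n)) atTop (𝓝 (f (a • x + b • y))) :=
    (hf.tendsto _).comp ((hulim.const_smul a).add (hwlim.const_smul b))
  have l2 : Tendsto (fun n => max (f (u n)) (f (w n))) atTop (𝓝 (max (f x) (f y))) :=
    ((hf.tendsto x).comp hulim).max ((hf.tendsto y).comp hwlim)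
  exact le_of_tendsto_of_tendsto' l1 l2 hseq
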